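/- Let L/K be a finite Galois extension of degree n with Galois group G and let σ ∈ G have even multiplicative order 2r > 2. Then for every nonzero b ∈ L, the alternating K-bilinear form f_{b,σ} has rank either n − n/r or n, and both ranks occur for suitable choices of nonzero b. -/

import Mathlib

variable {K L : Type*} [Field K] [Field L] [Algebra K L]

/-- The alternating bilinear form `f_{b,σ}(x,y) = Tr^L_K (b * (x * σ y - σ x * y))`,
where `Tr^L_K` is the trace form of the extension `L/K`. -/
noncomputable def galoisAltForm (b : L) (σ : L ≃ₐ[K] L) : (L →ₗ[K] L →ₗ[K] K) :=
  LinearMap.mk₂ K (fun x y => Algebra.trace K L (b * (x * σ y - σ x * y)))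
    (fun x x' y => by
      try dsimp only
      rw [show b * ((x + x') * σ y - σ (x + x') * y)
            = b * (x * σ y - σ x * y) + b * (x' * σ y - σ x' * y) by
          rw [map_add σ]; ring, map_add])
    (fun a x y => by
      try dsimp only
      rw [show b * ((a • x) * σ y - σ (a • x) * y)
            = a • (b * (x * σ y - σ x * y)) by
          rw [map_smul σ]
          simp only [smul_sub, smul_mul_assoc, mul_smul_comm, mul_sub], map_smul])
    (fun x y y' => by
      try dsimp only
      rw [show b * (x * σ (y + y') - σ x * (y + y'))
            = b * (x * σ y - σ x * y) + b * (x * σ y' - σ x * y') by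
          rw [map_add σ]; ring, map_add])
    (fun a x y => by
      try dsimp only
      rw [show b * (x * σ (a • y) - σ x * (a • y))
            = a • (b * (x * σ y - σ x * y)) by
          rw [map_smul σ]
          simp only [smul_sub, smul_mul_assoc, mul_smul_comm, mul_sub], map_smul])

/-- The rank of a bilinear form on `L`: `dim_K L` minus the dimension of its radical
`{x : L | ∀ y, f x y = 0}` (which is the kernel of `f` viewed as a map `L →ₗ[K] (L →ₗ[K] K)`). -/
noncomputable def formRank (f : (L →ₗ[K] L →ₗ[K] K)) : ℕ :=
  Module.finrank K L - Module.finrank K (LinearMap.ker f)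

open Finset Polynomial

/-- The twist map whose kernel is the radical of `galoisAltForm b σ`. -/
noncomputable def twistMap (b : L) (σ : L ≃ₐ[K] L) : L →ₗ[K] L :=
  σ.symm.toLinearMap ∘ₗ LinearMap.mulLeft K b - LinearMap.mulLeft K b ∘ₗ σ.toLinearMap

lemma twistMap_apply (b : L) (σ : L ≃ₐ[K] L) (x : L) :
    twistMap b σ x = σ.symm (b * x) - b * σ x := rfl

lemma mem_ker_twistMap_iff (b : L) (σ : L ≃ₐ[K] L) (x : L) :
    x ∈ LinearMap.ker (twistMap b σ) ↔ b * x = σ b * σ (σ x) := by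
  rw [LinearMap.mem_ker, twistMap_apply, sub_eq_zero]
  constructor
  · intro h
    have := congrArg σ h
    rwa [AlgEquiv.apply_symm_apply, map_mul] at this
  · intro h
    apply σ.injective
    rw [AlgEquiv.apply_symm_apply, map_mul]
    exact h

lemma trace_algEquiv_apply [FiniteDimensional K L] [IsGalois K L] (g : L ≃ₐ[K] L) (x : L) :
    Algebra.trace K L (g x) = Algebra.trace K L x := by
  apply (algebraMap K L).injective
  rw [trace_eq_sum_automorphisms, trace_eq_sum_automorphisms]
  exact Fintype.sum_bijective (fun h => h * g) (Group.mulRight_bijective g) _ _ (fun h => rfl)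

lemma galoisAltForm_apply_eq [FiniteDimensional K L] [IsGalois K L] (b : L) (σ : L ≃ₐ[K] L)
    (x y : L) : galoisAltForm b σ x y = Algebra.traceForm K L (twistMap b σ x) y := by
  have h1 : b * (x * σ y - σ x * y) = σ (σ.symm (b * x) * y) - (b * σ x) * y := by
    rw [map_mul, AlgEquiv.apply_symm_apply]; ring
  show Algebra.trace K L (b * (x * σ y - σ x * y)) = _
  rw [Algebra.traceForm_apply, h1, map_sub, trace_algEquiv_apply, twistMap_apply, sub_mul,
    map_sub]

lemma ker_galoisAltForm [FiniteDimensional K L] [IsGalois K L] (b : L) (σ : L ≃ₐ[K] L) :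
    LinearMap.ker (galoisAltForm b σ) = LinearMap.ker (twistMap b σ) := by
  ext x
  simp only [LinearMap.mem_ker]
  constructor
  · intro h
    exact (traceForm_nondegenerate K L).1 _
      (fun y => by rw [← galoisAltForm_apply_eq, h]; rfl)
  · intro h
    ext y
    rw [galoisAltForm_apply_eq, h]
    simp

lemma mem_fixedField_zpowers_iff (τ : L ≃ₐ[K] L) (x : L) :
    x ∈ IntermediateField.fixedField (Subgroup.zpowers τ) ↔ τ x = x := by
  have hpow : ∀ m : ℕ, τ x = x → (τ ^ m) x = x := by
    intro m h
    induction m with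
    | zero => simp
    | succ m ih => rw [pow_succ, AlgEquiv.mul_apply, h, ih]
  constructor
  · intro h
    exact h ⟨τ, Subgroup.mem_zpowers τ⟩
  · intro h g
    obtain ⟨g, k, rfl⟩ := g
    show (τ ^ k) x = x
    rcases k with n | n
    · simpa using hpow n h
    · rw [zpow_negSucc]
      have hn := hpow (n + 1) h
      calc (τ ^ (n+1))⁻¹ x = (τ ^ (n+1))⁻¹ ((τ ^ (n+1)) x) := by rw [hn]
        _ = ((τ ^ (n+1))⁻¹ * (τ ^ (n+1))) x := rfl
        _ = x := by rw [inv_mul_cancel]; rfl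

lemma sq_apply (σ : L ≃ₐ[K] L) (y : L) : (σ ^ 2) y = σ (σ y) := by
  rw [pow_two, AlgEquiv.mul_apply]

lemma finrank_ker_twistMap (σ : L ≃ₐ[K] L) {b : L} (hb : b ≠ 0) {x₀ : L} (hx₀ : x₀ ≠ 0)
    (hmem : x₀ ∈ LinearMap.ker (twistMap b σ)) :
    Module.finrank K (LinearMap.ker (twistMap b σ))
      = Module.finrank K (IntermediateField.fixedField (Subgroup.zpowers (σ ^ 2))) := by
  set F := IntermediateField.fixedField (Subgroup.zpowers (σ ^ 2)) with hF
  let φ : F →ₗ[K] L := (LinearMap.mulRight K x₀).comp F.val.toLinearMap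
  have hφ : ∀ f : F, φ f = (f : L) * x₀ := fun f => rfl
  have hinj : Function.Injective φ := by
    intro f g hfg
    rw [hφ, hφ] at hfg
    exact Subtype.ext (mul_right_cancel₀ hx₀ hfg)
  have hx₀e : b * x₀ = σ b * σ (σ x₀) := (mem_ker_twistMap_iff b σ x₀).1 hmem
  have hσb : σ b ≠ 0 := fun h => hb (by simpa using σ.injective (h.trans (map_zero σ).symm))
  have hσx₀ : σ (σ x₀) ≠ 0 := by
    intro h
    exact hx₀ (by simpa using σ.injective ((σ.injective (h.trans (map_zero σ).symm)).trans
      (map_zero σ).symm))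
  have hrange : LinearMap.range φ = LinearMap.ker (twistMap b σ) := by
    ext x
    rw [LinearMap.mem_range]
    constructor
    · rintro ⟨f, rfl⟩
      rw [hφ, mem_ker_twistMap_iff]
      have hf : σ (σ (f : L)) = (f : L) := by
        have h2 := (mem_fixedField_zpowers_iff (σ ^ 2) (f : L)).1 f.2
        rwa [sq_apply] at h2
      calc b * ((f : L) * x₀) = (f : L) * (b * x₀) := by ring
        _ = (f : L) * (σ b * σ (σ x₀)) := by rw [hx₀e]
        _ = σ b * (σ (σ (f : L)) * σ (σ x₀)) := by rw [hf]; ring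
        _ = σ b * σ (σ ((f : L) * x₀)) := by rw [map_mul, map_mul]
    · intro hx
      rw [mem_ker_twistMap_iff] at hx
      refine ⟨⟨x * x₀⁻¹, ?_⟩, ?_⟩
      · rw [hF, mem_fixedField_zpowers_iff, sq_apply, map_mul, map_mul, map_inv₀, map_inv₀]
        have e1 : σ (σ x) = (σ b)⁻¹ * (b * x) := by
          rw [hx]; field_simp
        have e2 : σ (σ x₀) = (σ b)⁻¹ * (b * x₀) := by
          rw [hx₀e]; field_simp
        rw [e1, e2]
        field_simp
      · rw [hφ]
        field_simp
  rw [← hrange, LinearMap.finrank_range_of_inj hinj]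

lemma ker_twistMap_eq_bot (σ : L ≃ₐ[K] L) {r : ℕ} (hord : orderOf σ = 2 * r) (b : L)
    (hne : ∏ i ∈ range r, (σ ^ (2 * i)) b ≠ ∏ i ∈ range r, (σ ^ (2 * i + 1)) b) :
    LinearMap.ker (twistMap b σ) = ⊥ := by
  rw [eq_bot_iff]
  intro x hx
  rw [Submodule.mem_bot]
  by_contra hx0
  have hxe : b * x = σ b * σ (σ x) := (mem_ker_twistMap_iff b σ x).1 hx
  have haux : ∀ (m : ℕ) (y : L), (σ ^ m) (σ y) = (σ ^ (m + 1)) y := by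
    intro m y
    rw [pow_succ, AlgEquiv.mul_apply]
  have key : ∀ k, (∏ i ∈ range k, (σ ^ (2 * i)) b) * x
      = (∏ i ∈ range k, (σ ^ (2 * i + 1)) b) * (σ ^ (2 * k)) x := by
    intro k
    induction k with
    | zero => simp
    | succ k ih =>
      rw [prod_range_succ, prod_range_succ]
      have hshift : (σ ^ (2 * k)) b * (σ ^ (2 * k)) x
          = (σ ^ (2 * k + 1)) b * (σ ^ (2 * (k + 1))) x := by
        have h0 := congrArg (σ ^ (2 * k)) hxe
        rw [map_mul, map_mul, haux, haux] at h0
        have h22 : 2 * k + 1 + 1 = 2 * (k + 1) := by omega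
        calc (σ ^ (2 * k)) b * (σ ^ (2 * k)) x
            = (σ ^ (2 * k)) (b * x) := by rw [map_mul]
          _ = (σ ^ (2 * k + 1)) b * (σ ^ (2 * k + 1)) (σ x) := by rw [map_mul]; exact h0
          _ = (σ ^ (2 * k + 1)) b * (σ ^ (2 * (k + 1))) x := by rw [haux, h22]
      calc (∏ i ∈ range k, (σ ^ (2 * i)) b) * (σ ^ (2 * k)) b * x
          = (σ ^ (2 * k)) b * ((∏ i ∈ range k, (σ ^ (2 * i)) b) * x) := by ring
        _ = (σ ^ (2 * k)) b * ((∏ i ∈ range k, (σ ^ (2 * i + 1)) b) * (σ ^ (2 * k)) x) := by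
            rw [ih]
        _ = (∏ i ∈ range k, (σ ^ (2 * i + 1)) b) * ((σ ^ (2 * k)) b * (σ ^ (2 * k)) x) := by
            ring
        _ = (∏ i ∈ range k, (σ ^ (2 * i + 1)) b) * ((σ ^ (2 * k + 1)) b
              * (σ ^ (2 * (k + 1))) x) := by rw [hshift]
        _ = (∏ i ∈ range k, (σ ^ (2 * i + 1)) b) * (σ ^ (2 * k + 1)) b
              * (σ ^ (2 * (k + 1))) x := by ring
  have hr := key r
  have h1 : σ ^ (2 * r) = 1 := by rw [← hord]; exact pow_orderOf_eq_one σ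
  rw [h1] at hr
  simp only [AlgEquiv.one_apply] at hr
  exact hne (mul_right_cancel₀ hx0 hr)

lemma exists_sum_ne [FiniteDimensional K L] (σ : L ≃ₐ[K] L) (a : ℕ → L) {i₀ : ℕ}
    (hi₀ : i₀ < orderOf σ) (ha : a i₀ ≠ 0) :
    ∃ z : L, ∑ i ∈ range (orderOf σ), a i * (σ ^ i) z ≠ 0 := by
  by_contra h
  push_neg at h
  have hinj : Function.Injective
      (fun i : Fin (orderOf σ) => (MonoidHomClass.toMonoidHom (σ ^ (i : ℕ)) : L →* L)) := by
    intro i j hij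
    apply Fin.ext
    refine pow_injOn_Iio_orderOf (x := σ) i.2 j.2 ?_
    ext x
    exact DFunLike.congr_fun hij x
  have hli : LinearIndependent L
      (fun i : Fin (orderOf σ) => ((MonoidHomClass.toMonoidHom (σ ^ (i : ℕ)) : L →* L) : L → L)) :=
    (linearIndependent_monoidHom L L).comp _ hinj
  rw [Fintype.linearIndependent_iff] at hli
  have h0 : ∑ i : Fin (orderOf σ), a i •
      ((MonoidHomClass.toMonoidHom (σ ^ (i : ℕ)) : L →* L) : L → L) = 0 := by
    funext z
    have := h z
    rw [← Fin.sum_univ_eq_sum_range (fun i => a i * (σ ^ i) z)] at this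
    simpa [Pi.smul_apply, smul_eq_mul] using this
  exact ha (hli (fun i => a i) h0 ⟨i₀, hi₀⟩)

lemma hilbert90_cyclic [FiniteDimensional K L] (τ : L ≃ₐ[K] L) (hm : 0 < orderOf τ) (c : L)
    (hc : ∏ i ∈ range (orderOf τ), (τ ^ i) c = 1) : ∃ y : L, y ≠ 0 ∧ c * τ y = y := by
  set m := orderOf τ with hmdef
  set a : ℕ → L := fun i => ∏ j ∈ range i, (τ ^ j) c with hadef
  have ha0 : a 0 = 1 := by simp [hadef]
  obtain ⟨z, hz⟩ := exists_sum_ne τ a hm (by rw [ha0]; exact one_ne_zero)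
  refine ⟨∑ i ∈ range m, a i * (τ ^ i) z, hz, ?_⟩
  have haux : ∀ (k : ℕ) (y : L), τ ((τ ^ k) y) = (τ ^ (k + 1)) y := by
    intro k y
    rw [pow_succ', AlgEquiv.mul_apply]
  have step : ∀ i, c * τ (a i * (τ ^ i) z) = a (i + 1) * (τ ^ (i + 1)) z := by
    intro i
    rw [map_mul, haux]
    have h1 : c * τ (a i) = a (i + 1) := by
      rw [hadef]
      simp only
      rw [map_prod]
      have : ∀ j ∈ range i, τ ((τ ^ j) c) = (τ ^ (j + 1)) c := fun j _ => haux j c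
      rw [prod_congr rfl this, prod_range_succ']
      simp [mul_comm]
    rw [← h1]; ring
  rw [map_sum, Finset.mul_sum]
  have : ∑ i ∈ range m, c * τ (a i * (τ ^ i) z) = ∑ i ∈ range m, a (i + 1) * (τ ^ (i + 1)) z :=
    Finset.sum_congr rfl (fun i _ => step i)
  rw [this]
  -- now shift the sum
  have ham : a m = 1 := hc
  have hτm : (τ : L ≃ₐ[K] L) ^ m = 1 := pow_orderOf_eq_one τ
  have h2 : ∑ i ∈ range (m + 1), a i * (τ ^ i) z
      = (∑ i ∈ range m, a (i + 1) * (τ ^ (i + 1)) z) + a 0 * (τ ^ 0) z := by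
    rw [Finset.sum_range_succ']
  have h3 : ∑ i ∈ range (m + 1), a i * (τ ^ i) z
      = (∑ i ∈ range m, a i * (τ ^ i) z) + a m * (τ ^ m) z := by
    rw [Finset.sum_range_succ]
  have h4 : a m * (τ ^ m) z = a 0 * (τ ^ 0) z := by
    rw [ham, ha0, hτm, pow_zero]
  have := h2.symm.trans h3
  rw [h4] at this
  exact add_right_cancel this

lemma exists_fixed_not_fixed [FiniteDimensional K L] (σ : L ≃ₐ[K] L) {r : ℕ} (hr : 2 ≤ r)
    (hord : orderOf σ = 2 * r) : ∃ d : L, (σ ^ 2) d = d ∧ σ d ≠ d := by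
  by_contra h
  push_neg at h
  have hle : IntermediateField.fixedField (Subgroup.zpowers (σ ^ 2))
      ≤ IntermediateField.fixedField (Subgroup.zpowers σ) := by
    intro x hx
    rw [mem_fixedField_zpowers_iff] at hx ⊢
    exact h x hx
  have hsub : Subgroup.zpowers σ ≤ Subgroup.zpowers (σ ^ 2) := by
    rw [← IntermediateField.fixingSubgroup_fixedField (Subgroup.zpowers (σ ^ 2))]
    exact (IntermediateField.le_iff_le _ _).mp hle
  obtain ⟨k, hk⟩ := hsub (Subgroup.mem_zpowers σ)
  have h1 : σ ^ ((2 : ℤ) * k) = σ := by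
    rw [zpow_mul]
    simpa using hk
  have h2 : σ ^ ((2 : ℤ) * k - 1) = 1 := by
    rw [zpow_sub, h1, zpow_one, mul_inv_cancel]
  have h3 : ((orderOf σ : ℤ)) ∣ (2 * k - 1) := orderOf_dvd_iff_zpow_eq_one.mpr h2
  rw [hord] at h3
  obtain ⟨m, hm⟩ := h3
  have h4 : (2 : ℤ) ∣ 2 * k - 1 := ⟨(r : ℤ) * m, by push_cast at hm; linarith⟩
  omega

lemma exists_b_finite [FiniteDimensional K L] [Finite L] (σ : L ≃ₐ[K] L) {r : ℕ} (hr : 2 ≤ r)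
    (hord : orderOf σ = 2 * r) :
    ∃ b : L, ∏ i ∈ range r, (σ ^ (2 * i)) b ≠ ∏ i ∈ range r, (σ ^ (2 * i + 1)) b := by
  classical
  have hr0 : 0 < r := by omega
  set τ := σ ^ 2 with hτ
  have hτord : orderOf τ = r := by
    rw [hτ, orderOf_pow, hord, Nat.gcd_comm, Nat.gcd_eq_left ⟨r, rfl⟩]
    omega
  let u : (L ≃ₐ[K] L) → (Lˣ →* Lˣ) := fun g => Units.map (MonoidHomClass.toMonoidHom g)
  have hu : ∀ (g : L ≃ₐ[K] L) (y : Lˣ), ((u g y : Lˣ) : L) = g (y : L) := fun g y => rfl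
  set N : Lˣ →* Lˣ := ∏ i ∈ range r, u (σ ^ (2 * i)) with hN
  set δ : Lˣ →* Lˣ := MonoidHom.id Lˣ / u τ with hδ
  have hNval : ∀ y : Lˣ, ((N y : Lˣ) : L) = ∏ i ∈ range r, (σ ^ (2 * i)) (y : L) := by
    intro y
    rw [hN, MonoidHom.finset_prod_apply, ← Units.coeHom_apply, map_prod]
    rfl
  have hδval : ∀ y : Lˣ, ((δ y : Lˣ) : L) = (y : L) / τ (y : L) := by
    intro y
    rw [hδ, MonoidHom.div_apply, Units.val_div_eq_div_val]
    rfl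
  have hσ2r : σ ^ (2 * r) = 1 := by rw [← hord]; exact pow_orderOf_eq_one σ
  have hshift : ∀ x : L, x ≠ 0 →
      ∏ i ∈ range r, (σ ^ (2 * i)) (τ x) = ∏ i ∈ range r, (σ ^ (2 * i)) x := by
    intro x hx
    have e : ∀ i ∈ range r, (σ ^ (2 * i)) (τ x) = (σ ^ (2 * (i + 1))) x := by
      intro i _
      rw [hτ, ← AlgEquiv.mul_apply, ← pow_add,
        show 2 * (i + 1) = 2 * i + 2 from by ring]
    rw [prod_congr rfl e]
    have h1 := prod_range_succ (fun i => (σ ^ (2 * i)) x) r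
    have h2 := prod_range_succ' (fun i => (σ ^ (2 * i)) x) r
    have hfr : (σ ^ (2 * r)) x = (σ ^ (2 * 0)) x := by rw [hσ2r]; simp
    rw [hfr] at h1
    have hne : (σ ^ (2 * 0)) x ≠ 0 := by
      simpa using hx
    exact mul_right_cancel₀ hne (h2.symm.trans h1)
  have key1 : ∀ y : Lˣ, τ ((N y : Lˣ) : L) = ((N y : Lˣ) : L) := by
    intro y
    rw [hNval, map_prod]
    have e : ∀ i ∈ range r, τ ((σ ^ (2 * i)) (y : L)) = (σ ^ (2 * i)) (τ (y : L)) := by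
      intro i _
      have h1 : τ * (σ ^ (2 * i)) = (σ ^ (2 * i)) * τ := by
        rw [hτ, ← pow_add, ← pow_add, add_comm]
      calc τ ((σ ^ (2 * i)) (y : L)) = (τ * σ ^ (2 * i)) (y : L) := rfl
        _ = ((σ ^ (2 * i)) * τ) (y : L) := by rw [h1]
        _ = (σ ^ (2 * i)) (τ (y : L)) := rfl
    rw [prod_congr rfl e, hshift (y : L) (Units.ne_zero y)]
  -- range δ ≤ ker N
  have hRδN : δ.range ≤ N.ker := by
    rintro w ⟨y, rfl⟩
    rw [MonoidHom.mem_ker]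
    have hNτ : N (u τ y) = N y := by
      apply Units.ext
      rw [hNval, hu, hshift (y : L) (Units.ne_zero y)]
      exact (hNval y).symm
    have : δ y = y * (u τ y)⁻¹ := by
      rw [hδ, MonoidHom.div_apply]
      rfl
    rw [this, map_mul, map_inv, hNτ, mul_inv_cancel]
  -- ker N ≤ range δ  (Hilbert 90)
  have hNδ : N.ker ≤ δ.range := by
    intro c hc
    rw [MonoidHom.mem_ker] at hc
    have hcval : ∏ i ∈ range (orderOf τ), (τ ^ i) ((c : Lˣ) : L) = 1 := by
      rw [hτord]
      have e : ∀ i ∈ range r, (τ ^ i) ((c : Lˣ) : L) = (σ ^ (2 * i)) ((c : Lˣ) : L) := by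
        intro i _
        rw [hτ, ← pow_mul]
      rw [prod_congr rfl e, ← hNval, hc]
      rfl
    obtain ⟨y, hy0, hy⟩ := hilbert90_cyclic τ (by omega) _ hcval
    refine ⟨Units.mk0 y hy0, ?_⟩
    apply Units.ext
    rw [hδval]
    have hτy : τ y ≠ 0 := fun h => hy0 (by simpa using congrArg τ.symm h)
    rw [Units.val_mk0]
    field_simp
    linear_combination -hy
  have heq : N.ker = δ.range := le_antisymm hNδ hRδN
  have hcard : ∀ f : Lˣ →* Lˣ, Nat.card Lˣ = Nat.card f.range * Nat.card f.ker := by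
    intro f
    rw [Subgroup.card_eq_card_quotient_mul_card_subgroup f.ker]
    congr 1
    exact Nat.card_congr (QuotientGroup.quotientKerEquivRange f).toEquiv
  have h1 := hcard N
  rw [heq] at h1
  have hpos : 0 < Nat.card δ.range := Nat.card_pos
  have hcr : Nat.card N.range = Nat.card δ.ker := by
    have hmm : Nat.card δ.range * Nat.card N.range
        = Nat.card δ.range * Nat.card δ.ker := by
      rw [mul_comm]
      exact h1.symm.trans (hcard δ)
    exact Nat.eq_of_mul_eq_mul_left hpos hmm
  have hNle : N.range ≤ δ.ker := by
    rintro w ⟨y, rfl⟩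
    rw [MonoidHom.mem_ker]
    apply Units.ext
    rw [hδval, key1, div_self (Units.ne_zero _)]
    rfl
  have hreq : N.range = δ.ker := Subgroup.eq_of_le_of_card_ge hNle (le_of_eq hcr.symm)
  obtain ⟨d, hd1, hd2⟩ := exists_fixed_not_fixed σ hr hord
  have hd0 : d ≠ 0 := fun h => hd2 (by rw [h, map_zero])
  have hdk : Units.mk0 d hd0 ∈ δ.ker := by
    rw [MonoidHom.mem_ker]
    apply Units.ext
    rw [hδval]
    show d / τ d = 1
    rw [show τ d = d from hd1]
    exact div_self hd0
  rw [← hreq] at hdk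
  obtain ⟨y, hy⟩ := hdk
  refine ⟨(y : L), ?_⟩
  have hvy : ∏ i ∈ range r, (σ ^ (2 * i)) (y : L) = d := by
    rw [← hNval, hy]
    rfl
  have hodd : ∏ i ∈ range r, (σ ^ (2 * i + 1)) (y : L) = σ d := by
    rw [← hvy, map_prod]
    refine prod_congr rfl ?_
    intro i _
    rw [pow_succ', AlgEquiv.mul_apply]
  rw [hvy, hodd]
  exact fun h => hd2 h.symm

lemma exists_b_infinite [FiniteDimensional K L] [Infinite K] (σ : L ≃ₐ[K] L) {r : ℕ}
    (hr : 2 ≤ r) (hord : orderOf σ = 2 * r) :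
    ∃ b : L, ∏ i ∈ range r, (σ ^ (2 * i)) b ≠ ∏ i ∈ range r, (σ ^ (2 * i + 1)) b := by
  by_contra hcon
  push_neg at hcon
  -- Dedekind: a point where the alternating character sum is nonzero
  obtain ⟨z, hz⟩ := exists_sum_ne σ (fun i => (-1 : L) ^ i) (i₀ := 0)
    (by rw [hord]; omega) (by norm_num)
  rw [hord] at hz
  have hsplit : ∀ (m : ℕ) (f : ℕ → L), ∑ i ∈ range (2 * m), (-1 : L) ^ i * f i
      = ∑ i ∈ range m, f (2 * i) - ∑ i ∈ range m, f (2 * i + 1) := by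
    intro m f
    induction m with
    | zero => simp
    | succ m ih =>
      have e : 2 * (m + 1) = (2 * m) + 1 + 1 := by ring
      rw [e, sum_range_succ, sum_range_succ, ih, sum_range_succ, sum_range_succ]
      have he : (-1 : L) ^ (2 * m) = 1 := Even.neg_one_pow ⟨m, by ring⟩
      have ho : (-1 : L) ^ (2 * m + 1) = -1 := by rw [pow_succ, he, one_mul]
      rw [he, ho]
      ring
  have hz2 : ∑ i ∈ range r, (σ ^ (2 * i)) z ≠ ∑ i ∈ range r, (σ ^ (2 * i + 1)) z := by
    intro he
    apply hz
    rw [hsplit r (fun i => (σ ^ i) z), he, sub_self]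
  set p1 : Polynomial L := ∏ i ∈ range r, (X + C ((σ ^ (2 * i)) z)) with hp1
  set p2 : Polynomial L := ∏ i ∈ range r, (X + C ((σ ^ (2 * i + 1)) z)) with hp2
  have heval : ∀ t : K, p1.eval (algebraMap K L t) = p2.eval (algebraMap K L t) := by
    intro t
    rw [hp1, hp2, eval_prod, eval_prod]
    simp only [eval_add, eval_X, eval_C]
    have e1 : ∀ i ∈ range r, algebraMap K L t + (σ ^ (2 * i)) z
        = (σ ^ (2 * i)) (algebraMap K L t + z) := by
      intro i _
      rw [map_add, AlgEquiv.commutes]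
    have e2 : ∀ i ∈ range r, algebraMap K L t + (σ ^ (2 * i + 1)) z
        = (σ ^ (2 * i + 1)) (algebraMap K L t + z) := by
      intro i _
      rw [map_add, AlgEquiv.commutes]
    rw [prod_congr rfl e1, prod_congr rfl e2]
    exact hcon (algebraMap K L t + z)
  have hp : p1 = p2 := by
    apply Polynomial.eq_of_infinite_eval_eq
    apply Set.Infinite.mono (s := Set.range (algebraMap K L))
    · rintro x ⟨t, rfl⟩
      exact heval t
    · exact Set.infinite_range_of_injective (algebraMap K L).injective
  have hnc : p1.nextCoeff = p2.nextCoeff := by rw [hp]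
  rw [hp1, hp2, Monic.nextCoeff_prod _ _ (fun i _ => monic_X_add_C _),
    Monic.nextCoeff_prod _ _ (fun i _ => monic_X_add_C _)] at hnc
  simp only [nextCoeff_X_add_C] at hnc
  exact hz2 hnc

/-- if `σ` has even order `2r > 2`, then every nonzero `b` gives a form
`f_{b,σ}` of rank `n − n/r` or `n`, and both ranks occur for suitable nonzero `b`. -/
theorem statement5 [FiniteDimensional K L] [IsGalois K L]
    (n : ℕ) (hn : Module.finrank K L = n)
    (σ : L ≃ₐ[K] L) (r : ℕ) (hr : 2 ≤ r) (hord : orderOf σ = 2 * r) :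
    (∀ b : L, b ≠ 0 →
        formRank (galoisAltForm b σ) = n - n / r ∨ formRank (galoisAltForm b σ) = n) ∧
    (∃ b : L, b ≠ 0 ∧ formRank (galoisAltForm b σ) = n - n / r) ∧
    (∃ b : L, b ≠ 0 ∧ formRank (galoisAltForm b σ) = n) := by
  classical
  have hr0 : 0 < r := by omega
  have hτord : orderOf (σ ^ 2) = r := by
    rw [orderOf_pow, hord, Nat.gcd_comm, Nat.gcd_eq_left ⟨r, rfl⟩]
    omega
  set F := IntermediateField.fixedField (Subgroup.zpowers (σ ^ 2)) with hF
  have hFL : Module.finrank F L = r := by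
    rw [IntermediateField.finrank_fixedField_eq_card, Nat.card_zpowers, hτord]
  have hKF : Module.finrank K F * r = n := by
    rw [← hFL, Module.finrank_mul_finrank]
    exact hn
  have hdiv : n / r = Module.finrank K F := by
    rw [← hKF, Nat.mul_div_cancel _ hr0]
  have hformRank : ∀ b : L,
      formRank (galoisAltForm b σ) = n - Module.finrank K (LinearMap.ker (twistMap b σ)) := by
    intro b
    unfold formRank
    rw [ker_galoisAltForm, hn]
  refine ⟨?_, ?_, ?_⟩
  · intro b hb
    by_cases hker : LinearMap.ker (twistMap b σ) = ⊥
    · right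
      rw [hformRank, hker, finrank_bot]
      omega
    · left
      obtain ⟨x₀, hx₀mem, hx₀⟩ := Submodule.ne_bot_iff _ |>.1 hker
      rw [hformRank, finrank_ker_twistMap σ hb hx₀ hx₀mem, ← hF, ← hdiv]
  · refine ⟨1, one_ne_zero, ?_⟩
    have hmem : (1 : L) ∈ LinearMap.ker (twistMap (1 : L) σ) := by
      rw [mem_ker_twistMap_iff]
      simp
    rw [hformRank, finrank_ker_twistMap σ one_ne_zero one_ne_zero hmem, ← hF, ← hdiv]
  · have hbex : ∃ b : L,
        ∏ i ∈ range r, (σ ^ (2 * i)) b ≠ ∏ i ∈ range r, (σ ^ (2 * i + 1)) b := by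
      rcases finite_or_infinite K with hK | hK
      · have : Finite L := Module.finite_of_finite K
        exact exists_b_finite σ hr hord
      · exact exists_b_infinite σ hr hord
    obtain ⟨b, hb⟩ := hbex
    have hb0 : b ≠ 0 := by
      rintro rfl
      apply hb
      simp only [map_zero]
    exact ⟨b, hb0, by rw [hformRank, ker_twistMap_eq_bot σ hord b hb, finrank_bot]; omega⟩
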